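/- Let (x₁, y₁, z₁) and (x₂, y₂, z₂) be orthonormal frames in ℝ³, let r ∈ ℝ³ with r ≠ 0, write u = r/|r|, let σ ∈ {−1, +1}, and let η, μ > 0 be real constants with μ > η/2. Define F_c(r, x₂, y₂, x₁) = σ·η·(u·x₂)(u·y₂) + μ·[ −x₁·y₂ + 2 (u·x₁)(u·y₂) ] (and correspondingly with z in place of y, and with (−r, x₁, ·, x₂) in place of (r, x₂, ·, x₁)). Then [ −x₁·y₂ + 2(u·x₁)(u·y₂) ]·F_c(r,x₂,y₂,x₁) + [ −x₂·y₁ + 2(u·x₂)(u·y₁) ]·F_c(−r,x₁,y₁,x₂) + [ −x₁·z₂ + 2(u·x₁)(u·z₂) ]·F_c(r,x₂,z₂,x₁) + [ −x₂·z₁ + 2(u·x₂)(u·z₁) ]·F_c(−r,x₁,z₁,x₂) ≥ 0. -/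

import Mathlib

open RealInnerProductSpace

/-- An orthonormal frame in ℝ³: an ordered triple of pairwise orthogonal unit vectors. -/
def IsONFrame (x y z : EuclideanSpace ℝ (Fin 3)) : Prop :=
  ‖x‖ = 1 ∧ ‖y‖ = 1 ∧ ‖z‖ = 1 ∧ ⟪x, y⟫ = 0 ∧ ⟪x, z⟫ = 0 ∧ ⟪y, z⟫ = 0

/-- The circling interaction term
`F_c(r, x₂, y₂, x₁) = σ η (u·x₂)(u·y₂) + μ[ −x₁·y₂ + 2 (u·x₁)(u·y₂) ]` with `u = r/|r|`. -/
noncomputable def Fcirc (σ η μ : ℝ) (r x₂ y₂ x₁ : EuclideanSpace ℝ (Fin 3)) : ℝ :=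
  σ * η * (⟪‖r‖⁻¹ • r, x₂⟫ * ⟪‖r‖⁻¹ • r, y₂⟫) +
    μ * (-⟪x₁, y₂⟫ + 2 * ⟪‖r‖⁻¹ • r, x₁⟫ * ⟪‖r‖⁻¹ • r, y₂⟫)

/-- Parseval identity for an orthonormal frame in ℝ³. -/
lemma parseval {x y z : EuclideanSpace ℝ (Fin 3)} (h : IsONFrame x y z)
    (v w : EuclideanSpace ℝ (Fin 3)) :
    ⟪v, w⟫ = ⟪v, x⟫ * ⟪w, x⟫ + ⟪v, y⟫ * ⟪w, y⟫ + ⟪v, z⟫ * ⟪w, z⟫ := by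
  obtain ⟨hx, hy, hz, hxy, hxz, hyz⟩ := h
  have hxx : ⟪x, x⟫ = (1:ℝ) := by rw [real_inner_self_eq_norm_sq, hx]; norm_num
  have hyy : ⟪y, y⟫ = (1:ℝ) := by rw [real_inner_self_eq_norm_sq, hy]; norm_num
  have hzz : ⟪z, z⟫ = (1:ℝ) := by rw [real_inner_self_eq_norm_sq, hz]; norm_num
  set f : Fin 3 → EuclideanSpace ℝ (Fin 3) := ![x, y, z] with hf
  have hon : Orthonormal ℝ f := by
    rw [orthonormal_iff_ite]
    intro i j
    fin_cases i <;> fin_cases j <;>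
      simp only [f, Matrix.cons_val_zero, Matrix.cons_val_one, Matrix.head_cons,
        Matrix.cons_val_two, Matrix.tail_cons] <;>
      simp [hx, hy, hz, hxx, hyy, hzz, hxy, hxz, hyz,
        real_inner_comm x y, real_inner_comm x z, real_inner_comm y z]
  have hsp : ⊤ ≤ Submodule.span ℝ (Set.range f) := by
    rw [hon.linearIndependent.span_eq_top_of_card_eq_finrank
      (by simp [finrank_euclideanSpace_fin])]
  let b : OrthonormalBasis (Fin 3) ℝ (EuclideanSpace ℝ (Fin 3)) := OrthonormalBasis.mk hon hsp
  have hb := b.sum_inner_mul_inner v w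
  have hb0 : b 0 = x := by simp [b, OrthonormalBasis.coe_mk, f]
  have hb1 : b 1 = y := by simp [b, OrthonormalBasis.coe_mk, f]
  have hb2 : b 2 = z := by simp [b, OrthonormalBasis.coe_mk, f]
  rw [Fin.sum_univ_three, hb0, hb1, hb2] at hb
  rw [← hb, real_inner_comm x w, real_inner_comm y w, real_inner_comm z w]

lemma core_circ (x y c : ℝ) (hx : x^2 ≤ 1) (hy : y^2 ≤ 1) (hc : c^2 ≤ (1-x^2)*(1-y^2)) :
    0 ≤ 1 - (x*y-c)^2 + (2*x*y - (x*y-c)*(x^2+y^2)) := by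
  have h1xy : 0 ≤ 1 - x*y := by nlinarith [sq_nonneg (x-y), sq_nonneg (x+y)]
  have hcl : -(1-x*y) ≤ c := by nlinarith [sq_nonneg (x-y)]
  nlinarith [mul_nonneg (by linarith : (0:ℝ) ≤ 1 - x*y + c) (sq_nonneg (x+y)), hc]

set_option maxHeartbeats 1000000 in
lemma key_circ (a1 b1 c1 a2 b2 c2 p q12 s12 q21 s21 σ η μ : ℝ)
    (hσ : σ = -1 ∨ σ = 1) (hη : 0 < η) (hμ : η/2 < μ)
    (F1 : p^2 + q12^2 + s12^2 = 1)
    (F2 : a1 = a2*p + b2*q12 + c2*s12)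
    (F3 : a2^2 + b2^2 + c2^2 = 1)
    (F4 : p^2 + q21^2 + s21^2 = 1)
    (F5 : a2 = a1*p + b1*q21 + c1*s21)
    (F6 : a1^2 + b1^2 + c1^2 = 1)
    (Fcs : (p - a1*a2)^2 ≤ (1-a1^2)*(1-a2^2)) :
    0 ≤ (-q12 + 2*a1*b2) * (σ*η*(a2*b2) + μ*(-q12 + 2*a1*b2))
      + (-q21 + 2*a2*b1) * (σ*η*(a1*b1) + μ*(-q21 + 2*a2*b1))
      + (-s12 + 2*a1*c2) * (σ*η*(a2*c2) + μ*(-s12 + 2*a1*c2))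
      + (-s21 + 2*a2*c1) * (σ*η*(a1*c1) + μ*(-s21 + 2*a2*c1)) := by
  have ha1 : a1^2 ≤ 1 := by nlinarith [sq_nonneg b1, sq_nonneg c1]
  have ha2 : a2^2 ≤ 1 := by nlinarith [sq_nonneg b2, sq_nonneg c2]
  have hAC : (-q12 + 2*a1*b2)^2 + (-s12 + 2*a1*c2)^2 = 1 - (2*a1*a2 - p)^2 := by
    linear_combination F1 + 4*a1^2*F3 + 4*a1*F2
  have hBD : (-q21 + 2*a2*b1)^2 + (-s21 + 2*a2*c1)^2 = 1 - (2*a1*a2 - p)^2 := by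
    linear_combination F4 + 4*a2^2*F6 + 4*a2*F5
  have hS : (-q12 + 2*a1*b2)*(a2*b2) + (-s12 + 2*a1*c2)*(a2*c2)
      + (-q21 + 2*a2*b1)*(a1*b1) + (-s21 + 2*a2*c1)*(a1*c1)
      = 2*a1*a2 - (2*a1*a2 - p)*(a1^2 + a2^2) := by
    linear_combination a2*F2 + 2*a1*a2*F3 + a1*F5 + 2*a1*a2*F6
  have hplus := core_circ a1 a2 (p - a1*a2) ha1 ha2 Fcs
  have hminus := core_circ a1 (-a2) (-(p - a1*a2)) ha1 (by simpa using ha2) (by nlinarith [Fcs])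
  have hpos : 0 ≤ 1 - (2*a1*a2 - p)^2 := by
    nlinarith [sq_nonneg (-q12 + 2*a1*b2), sq_nonneg (-s12 + 2*a1*c2)]
  have hmu : 0 ≤ (2*μ - η) * (1 - (2*a1*a2 - p)^2) := mul_nonneg (by linarith) hpos
  have hpe := mul_nonneg hη.le hplus
  have hme := mul_nonneg hη.le hminus
  have hE : (-q12 + 2*a1*b2) * (σ*η*(a2*b2) + μ*(-q12 + 2*a1*b2))
      + (-q21 + 2*a2*b1) * (σ*η*(a1*b1) + μ*(-q21 + 2*a2*b1))
      + (-s12 + 2*a1*c2) * (σ*η*(a2*c2) + μ*(-s12 + 2*a1*c2))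
      + (-s21 + 2*a2*c1) * (σ*η*(a1*c1) + μ*(-s21 + 2*a2*c1))
      = μ*(2*(1 - (2*a1*a2 - p)^2)) + σ*η*(2*a1*a2 - (2*a1*a2 - p)*(a1^2 + a2^2)) := by
    linear_combination μ*hAC + μ*hBD + σ*η*hS
  rw [hE]
  rcases hσ with h | h <;> subst h <;> linarith [hmu, hpe, hme]

set_option maxHeartbeats 1000000 in
theorem stmt12 (x₁ y₁ z₁ x₂ y₂ z₂ : EuclideanSpace ℝ (Fin 3))
    (h1 : IsONFrame x₁ y₁ z₁) (h2 : IsONFrame x₂ y₂ z₂)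
    (r : EuclideanSpace ℝ (Fin 3)) (hr : r ≠ 0)
    (σ : ℝ) (hσ : σ = -1 ∨ σ = 1)
    (η μ : ℝ) (hη : 0 < η) (hμ0 : 0 < μ) (hμ : η / 2 < μ) :
    (-⟪x₁, y₂⟫ + 2 * ⟪‖r‖⁻¹ • r, x₁⟫ * ⟪‖r‖⁻¹ • r, y₂⟫) * Fcirc σ η μ r x₂ y₂ x₁ +
    (-⟪x₂, y₁⟫ + 2 * ⟪‖r‖⁻¹ • r, x₂⟫ * ⟪‖r‖⁻¹ • r, y₁⟫) * Fcirc σ η μ (-r) x₁ y₁ x₂ +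
    (-⟪x₁, z₂⟫ + 2 * ⟪‖r‖⁻¹ • r, x₁⟫ * ⟪‖r‖⁻¹ • r, z₂⟫) * Fcirc σ η μ r x₂ z₂ x₁ +
    (-⟪x₂, z₁⟫ + 2 * ⟪‖r‖⁻¹ • r, x₂⟫ * ⟪‖r‖⁻¹ • r, z₁⟫) * Fcirc σ η μ (-r) x₁ z₁ x₂ ≥ 0 := by
  simp only [Fcirc, norm_neg, smul_neg, inner_neg_left]
  set u : EuclideanSpace ℝ (Fin 3) := ‖r‖⁻¹ • r with hu
  have hun : ‖u‖ = 1 := norm_smul_inv_norm hr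
  have huu : ⟪u, u⟫ = (1:ℝ) := by rw [real_inner_self_eq_norm_sq, hun]; norm_num
  have hx1x1 : ⟪x₁, x₁⟫ = (1:ℝ) := by rw [real_inner_self_eq_norm_sq, h1.1]; norm_num
  have hx2x2 : ⟪x₂, x₂⟫ = (1:ℝ) := by rw [real_inner_self_eq_norm_sq, h2.1]; norm_num
  have F1 : ⟪x₁, x₂⟫^2 + ⟪x₁, y₂⟫^2 + ⟪x₁, z₂⟫^2 = 1 := by
    have h := parseval h2 x₁ x₁; rw [hx1x1] at h; linear_combination -h
  have F2 : ⟪u, x₁⟫ = ⟪u, x₂⟫*⟪x₁, x₂⟫ + ⟪u, y₂⟫*⟪x₁, y₂⟫ + ⟪u, z₂⟫*⟪x₁, z₂⟫ :=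
    parseval h2 u x₁
  have F3 : ⟪u, x₂⟫^2 + ⟪u, y₂⟫^2 + ⟪u, z₂⟫^2 = 1 := by
    have h := parseval h2 u u; rw [huu] at h; linear_combination -h
  have F4 : ⟪x₁, x₂⟫^2 + ⟪x₂, y₁⟫^2 + ⟪x₂, z₁⟫^2 = 1 := by
    have h := parseval h1 x₂ x₂; rw [hx2x2, real_inner_comm x₁ x₂] at h; linear_combination -h
  have F5 : ⟪u, x₂⟫ = ⟪u, x₁⟫*⟪x₁, x₂⟫ + ⟪u, y₁⟫*⟪x₂, y₁⟫ + ⟪u, z₁⟫*⟪x₂, z₁⟫ := by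
    have h := parseval h1 u x₂; rw [real_inner_comm x₁ x₂] at h; exact h
  have F6 : ⟪u, x₁⟫^2 + ⟪u, y₁⟫^2 + ⟪u, z₁⟫^2 = 1 := by
    have h := parseval h1 u u; rw [huu] at h; linear_combination -h
  -- Cauchy-Schwarz for the orthogonal components
  set v1 : EuclideanSpace ℝ (Fin 3) := x₁ - ⟪u, x₁⟫ • u with hv1
  set v2 : EuclideanSpace ℝ (Fin 3) := x₂ - ⟪u, x₂⟫ • u with hv2
  have hv12 : ⟪v1, v2⟫ = ⟪x₁, x₂⟫ - ⟪u, x₁⟫*⟪u, x₂⟫ := by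
    simp only [hv1, hv2, inner_sub_left, inner_sub_right, real_inner_smul_left,
      real_inner_smul_right]
    rw [huu, real_inner_comm x₁ u]
    ring
  have hv11 : ⟪v1, v1⟫ = 1 - ⟪u, x₁⟫^2 := by
    simp only [hv1, inner_sub_left, inner_sub_right, real_inner_smul_left,
      real_inner_smul_right]
    rw [huu, real_inner_comm x₁ u, hx1x1]
    ring
  have hv22 : ⟪v2, v2⟫ = 1 - ⟪u, x₂⟫^2 := by
    simp only [hv2, inner_sub_left, inner_sub_right, real_inner_smul_left,
      real_inner_smul_right]
    rw [huu, real_inner_comm x₂ u, hx2x2]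
    ring
  have Fcs : (⟪x₁, x₂⟫ - ⟪u, x₁⟫*⟪u, x₂⟫)^2 ≤ (1 - ⟪u, x₁⟫^2)*(1 - ⟪u, x₂⟫^2) := by
    have h := real_inner_mul_inner_self_le v1 v2
    rw [hv12, hv11, hv22] at h
    nlinarith [h]
  have := key_circ ⟪u, x₁⟫ ⟪u, y₁⟫ ⟪u, z₁⟫ ⟪u, x₂⟫ ⟪u, y₂⟫ ⟪u, z₂⟫
    ⟪x₁, x₂⟫ ⟪x₁, y₂⟫ ⟪x₁, z₂⟫ ⟪x₂, y₁⟫ ⟪x₂, z₁⟫ σ η μ hσ hη hμ F1 F2 F3 F4 F5 F6 Fcs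
  linarith [this]
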